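/- For 1<q<p and every λ ∈ [0,1), the strict inequality ω_p(λ^{p−1}) < ω_q(λ^{q−1}) holds. -/

import Mathlib

open Real Set

private lemma H_antitone (r : ℝ) (hr : 1 < r) :
    AntitoneOn (fun z : ℝ => r * z ^ (r - 1) - (r - 1) * z ^ r) (Ici 1) := by
  have hderiv : ∀ z : ℝ, z ∈ Ici (1:ℝ) → HasDerivAt
      (fun z : ℝ => r * z ^ (r - 1) - (r - 1) * z ^ r)
      (r * ((r - 1) * z ^ (r - 1 - 1)) - (r - 1) * (r * z ^ (r - 1))) z := by
    intro z hz
    have hz0 : z ≠ 0 := by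
      have : (0:ℝ) < z := lt_of_lt_of_le one_pos hz
      exact this.ne'
    exact ((Real.hasDerivAt_rpow_const (Or.inl hz0)).const_mul r).sub
      ((Real.hasDerivAt_rpow_const (Or.inl hz0)).const_mul (r - 1))
  have hdiff : DifferentiableOn ℝ (fun z : ℝ => r * z ^ (r - 1) - (r - 1) * z ^ r)
      (interior (Ici (1:ℝ))) := by
    intro z hz
    rw [interior_Ici] at hz
    exact ((hderiv z (mem_Ici.mpr (le_of_lt hz))).differentiableAt).differentiableWithinAt
  refine antitoneOn_of_deriv_nonpos (convex_Ici 1) ?_ hdiff ?_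
  · intro z hz
    exact ((hderiv z hz).differentiableAt).continuousAt.continuousWithinAt
  · intro z hz
    rw [interior_Ici] at hz
    rw [(hderiv z (mem_Ici.mpr (le_of_lt hz))).deriv]
    have h1 : z ^ (r - 1 - 1) ≤ z ^ (r - 1) :=
      Real.rpow_le_rpow_of_exponent_le (le_of_lt hz) (by linarith)
    nlinarith [mul_le_mul_of_nonneg_left h1 (show (0:ℝ) ≤ r * (r - 1) by nlinarith)]

private lemma log_div_key {x y : ℝ} (hx : 0 < x) (hxy : x < y) (hy1 : y < 1) :
    Real.log (1 - y) / y < Real.log (1 - x) / x := by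
  have hy0 : 0 < y := hx.trans hxy
  have h1y : (0:ℝ) < 1 - y := by linarith
  have hne : (1 - y : ℝ) ≠ 1 := by intro h; nlinarith
  have ha : (0:ℝ) < x / y := div_pos hx hy0
  have hb : (0:ℝ) < 1 - x / y := by
    have : x / y < 1 := (div_lt_one hy0).mpr hxy
    linarith
  have hconc := strictConcaveOn_log_Ioi.2 (mem_Ioi.mpr h1y) (mem_Ioi.mpr one_pos) hne ha hb
    (by ring)
  simp only [smul_eq_mul, Real.log_one, mul_zero, add_zero] at hconc
  have harg : x / y * (1 - y) + (1 - x / y) * 1 = 1 - x := by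
    field_simp
    ring
  rw [harg] at hconc
  rw [div_lt_div_iff₀ hy0 hx]
  calc Real.log (1 - y) * x = (x / y * Real.log (1 - y)) * y := by
        field_simp
    _ < Real.log (1 - x) * y := by
        exact mul_lt_mul_of_pos_right hconc hy0

/-- For `1 < q < p` and every `λ ∈ [0,1)`, `ω_p(λ^(p-1)) < ω_q(λ^(q-1))`. -/
theorem omega_p_lt_omega_q (p q : ℝ) (hq : 1 < q) (hpq : q < p)
    (ωp ωq : ℝ → ℝ)
    (hωp : ∀ s ∈ Icc (0 : ℝ) 1, ωp s ∈ Icc 1 (p / (p - 1)) ∧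
      p * ωp s ^ (p - 1) - (p - 1) * ωp s ^ p = s)
    (hωq : ∀ s ∈ Icc (0 : ℝ) 1, ωq s ∈ Icc 1 (q / (q - 1)) ∧
      q * ωq s ^ (q - 1) - (q - 1) * ωq s ^ q = s) :
    ∀ l ∈ Ico (0 : ℝ) 1, ωp (l ^ (p - 1)) < ωq (l ^ (q - 1)) := by
  intro l hl
  obtain ⟨hl0, hl1⟩ := hl
  have hp : 1 < p := hq.trans hpq
  have hq1 : (0:ℝ) < q - 1 := by linarith
  have hp1 : (0:ℝ) < p - 1 := by linarith
  have hmemp : l ^ (p - 1) ∈ Icc (0:ℝ) 1 :=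
    ⟨Real.rpow_nonneg hl0 _, Real.rpow_le_one hl0 hl1.le hp1.le⟩
  have hmemq : l ^ (q - 1) ∈ Icc (0:ℝ) 1 :=
    ⟨Real.rpow_nonneg hl0 _, Real.rpow_le_one hl0 hl1.le hq1.le⟩
  obtain ⟨hwmem, hweq⟩ := hωp _ hmemp
  obtain ⟨hamem, haeq⟩ := hωq _ hmemq
  set w := ωp (l ^ (p - 1)) with hw
  set a := ωq (l ^ (q - 1)) with ha
  have ha1 : (1:ℝ) ≤ a := hamem.1
  have hw1 : (1:ℝ) ≤ w := hwmem.1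
  have ha0 : (0:ℝ) < a := lt_of_lt_of_le one_pos ha1
  -- key strict inequality:
  suffices hkey : p * a ^ (p - 1) - (p - 1) * a ^ p < l ^ (p - 1) by
    by_contra hle
    push_neg at hle  -- a ≤ w
    have := H_antitone p hp (mem_Ici.mpr ha1) (mem_Ici.mpr hw1) hle
    simp only at this
    rw [hweq] at this
    exact absurd hkey (not_lt.mpr this)
  -- factorization of H_r at a
  have hfact : ∀ r : ℝ, r * a ^ (r - 1) - (r - 1) * a ^ r
      = a ^ (r - 1) * (1 - (r - 1) * (a - 1)) := by
    intro r
    have : a ^ r = a ^ (r - 1) * a := by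
      rw [← Real.rpow_add_one ha0.ne' (r - 1)]
      ring_nf
    rw [this]; ring
  have hapow : ∀ r : ℝ, (0:ℝ) < a ^ r := fun r => Real.rpow_pos_of_pos ha0 r
  rcases eq_or_lt_of_le hl0 with hl0' | hl0'
  · -- l = 0 case
    have hlq : l ^ (q - 1) = 0 := by
      rw [← hl0']; exact Real.zero_rpow hq1.ne'
    have hlp : l ^ (p - 1) = 0 := by
      rw [← hl0']; exact Real.zero_rpow hp1.ne'
    rw [hlq] at haeq
    rw [hfact q] at haeq
    have hqa : 1 - (q - 1) * (a - 1) = 0 := by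
      rcases mul_eq_zero.mp haeq with h | h
      · exact absurd h (hapow _).ne'
      · exact h
    have hpa : 1 - (p - 1) * (a - 1) < 0 := by
      have h1 : (q - 1) * (a - 1) = 1 := by linarith
      have hb0 : (0:ℝ) < a - 1 := by nlinarith
      nlinarith [mul_pos (show (0:ℝ) < p - q by linarith) hb0]
    rw [hlp, hfact p]
    exact mul_neg_of_pos_of_neg (hapow _) hpa
  · -- 0 < l
    have hlppos : (0:ℝ) < l ^ (p - 1) := Real.rpow_pos_of_pos hl0' _
    rw [hfact p]
    rcases le_or_gt (1 - (p - 1) * (a - 1)) 0 with hc | hc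
    · calc a ^ (p - 1) * (1 - (p - 1) * (a - 1)) ≤ 0 :=
            mul_nonpos_of_nonneg_of_nonpos (hapow _).le hc
        _ < l ^ (p - 1) := hlppos
    · -- positive case: use log concavity
      have ha1' : 1 < a := by
        rcases eq_or_lt_of_le ha1 with h | h
        · exfalso
          rw [hfact q, ← h] at haeq
          simp at haeq
          have : l ^ (q - 1) < 1 := Real.rpow_lt_one hl0 hl1 hq1
          rw [← haeq] at this
          norm_num at this
        · exact h
      set b := a - 1 with hbdef
      have hb0 : (0:ℝ) < b := by simp [hbdef]; linarith
      have hxlt : (q - 1) * b < (p - 1) * b := by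
        apply mul_lt_mul_of_pos_right _ hb0; linarith
      have hy1 : (p - 1) * b < 1 := by linarith
      have hx0 : (0:ℝ) < (q - 1) * b := mul_pos hq1 hb0
      have hlog := log_div_key hx0 hxlt hy1
      -- translate: log(1-(p-1)b)/(p-1) < log(1-(q-1)b)/(q-1)
      have hlogp : Real.log (1 - (p-1)*b) / (p - 1) < Real.log (1 - (q-1)*b) / (q - 1) := by
        rw [div_lt_div_iff₀ (mul_pos hp1 hb0) (mul_pos hq1 hb0)] at hlog
        rw [div_lt_div_iff₀ hp1 hq1]
        nlinarith [hlog]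
      have hqpos : (0:ℝ) < 1 - (q - 1) * b := by
        have : (0:ℝ) < l ^ (q - 1) := Real.rpow_pos_of_pos hl0' _
        rw [← haeq, hfact q] at this
        by_contra hcon
        push_neg at hcon
        nlinarith [hapow (q-1), this]
      -- log of haeq
      have hlogq : (q - 1) * Real.log a + Real.log (1 - (q-1)*b) = (q - 1) * Real.log l := by
        have h1 : Real.log (a ^ (q-1) * (1 - (q-1)*b)) = (q-1) * Real.log a
            + Real.log (1 - (q-1)*b) := by
          rw [Real.log_mul (hapow _).ne' hqpos.ne', Real.log_rpow ha0]
        have h2 : Real.log (l ^ (q-1)) = (q-1) * Real.log l := Real.log_rpow hl0' _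
        rw [← h1, ← h2, ← hfact q, haeq]
      -- goal via logs
      have hgoal_log : Real.log (a ^ (p-1) * (1 - (p-1)*b)) < Real.log (l ^ (p-1)) := by
        rw [Real.log_mul (hapow _).ne' hc.ne', Real.log_rpow ha0, Real.log_rpow hl0']
        have : Real.log (1 - (q-1)*b) / (q-1) = Real.log l - Real.log a := by
          field_simp
          linarith [hlogq]
        rw [this] at hlogp
        rw [div_lt_iff₀ hp1] at hlogp
        nlinarith [hlogp]
      have hppos : (0:ℝ) < a ^ (p-1) * (1 - (p-1)*b) := mul_pos (hapow _) hc
      exact (Real.log_lt_log_iff hppos hlppos).mp hgoal_log
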